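/- Let O and N be points in the Euclidean plane and R > 0 with dist(O,N) < R/2. Then there exist infinitely many nondegenerate triangles ABC with circumcenter O, circumradius R, and nine-point center N (i.e., with dist(O,A) = dist(O,B) = dist(O,C) = R and midpoint(O, orthocenter(ABC)) = N); moreover, every such triangle is acute (all its angles are strictly less than π/2). -/

import Mathlib

open EuclideanGeometry Real

namespace InfTriAux

noncomputable section

local notation "V" => EuclideanSpace ℝ (Fin 2)
local notation "⟪" x ", " y "⟫" => @inner ℝ _ _ x y

/-- Rotation by 90 degrees. -/
def J (x : V) : V := !₂[-(x 1), x 0]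

lemma inner_J (x : V) : ⟪x, J x⟫ = 0 := by
  simp [J, PiLp.inner_apply, Fin.sum_univ_two, RCLike.inner_apply]
  ring

lemma norm_J (x : V) : ‖J x‖ = ‖x‖ := by
  rw [EuclideanSpace.norm_eq, EuclideanSpace.norm_eq]
  simp [J, Fin.sum_univ_two]
  ring_nf

def sv (R : ℝ) (v x : V) : V := (Real.sqrt (R^2 - ‖v - x‖^2/4) / ‖v - x‖) • J (v - x)

def bb (R : ℝ) (v x : V) : V := (2:ℝ)⁻¹ • (v - x) + sv R v x

def cc (R : ℝ) (v x : V) : V := (2:ℝ)⁻¹ • (v - x) - sv R v x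

lemma props {R : ℝ} (hR : 0 < R) {v x : V} (hx : ‖x‖ = R) (hv : ‖v‖ < R) :
    ‖bb R v x‖ = R ∧ ‖cc R v x‖ = R ∧ x + bb R v x + cc R v x = v ∧
      x ≠ bb R v x ∧ x ≠ cc R v x ∧ bb R v x ≠ cc R v x := by
  set w := v - x with hw
  have hw0 : w ≠ 0 := by
    intro h0
    have : v = x := by rw [hw] at h0; linear_combination (norm := abel) h0
    rw [this, hx] at hv; exact lt_irrefl R hv
  have hnw : 0 < ‖w‖ := norm_pos_iff.2 hw0
  have hw2 : ‖w‖ < 2 * R := by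
    calc ‖w‖ ≤ ‖v‖ + ‖x‖ := norm_sub_le v x
    _ < 2 * R := by rw [hx]; linarith
  have hrpos : 0 < R^2 - ‖w‖^2/4 := by nlinarith
  set r := Real.sqrt (R^2 - ‖w‖^2/4) with hr
  have hr0 : 0 < r := Real.sqrt_pos.2 hrpos
  have hr2 : r^2 = R^2 - ‖w‖^2/4 := Real.sq_sqrt hrpos.le
  have hsnorm : ‖sv R v x‖ = r := by
    rw [sv, norm_smul, norm_J, Real.norm_eq_abs, abs_of_nonneg (by positivity),
      div_mul_cancel₀ _ hnw.ne']
  have hsinner : ⟪w, sv R v x⟫ = 0 := by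
    rw [sv, inner_smul_right, ← hw, inner_J, mul_zero]
  have hhalf : ⟪(2:ℝ)⁻¹ • w, sv R v x⟫ = 0 := by
    rw [inner_smul_left, hsinner]; simp
  have hhn : ‖(2:ℝ)⁻¹ • w‖ = 2⁻¹ * ‖w‖ := by
    rw [norm_smul, Real.norm_eq_abs]; norm_num
  have hbn : ‖bb R v x‖ = R := by
    have h2 : ‖bb R v x‖^2 = R^2 := by
      rw [bb, norm_add_sq_real, hhalf, hsnorm, hhn]; nlinarith
    calc ‖bb R v x‖ = Real.sqrt (‖bb R v x‖^2) := (Real.sqrt_sq (norm_nonneg _)).symm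
    _ = R := by rw [h2, Real.sqrt_sq hR.le]
  have hcn : ‖cc R v x‖ = R := by
    have h2 : ‖cc R v x‖^2 = R^2 := by
      rw [cc, norm_sub_sq_real, hhalf, hsnorm, hhn]; nlinarith
    calc ‖cc R v x‖ = Real.sqrt (‖cc R v x‖^2) := (Real.sqrt_sq (norm_nonneg _)).symm
    _ = R := by rw [h2, Real.sqrt_sq hR.le]
  have hsum : x + bb R v x + cc R v x = v := by
    rw [bb, cc, ← hw]; module
  have hiv : ⟪x, v⟫ ≤ R * ‖v‖ := by
    calc ⟪x, v⟫ ≤ ‖x‖ * ‖v‖ := real_inner_le_norm x v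
    _ = R * ‖v‖ := by rw [hx]
  have hvn : 0 ≤ ‖v‖ := norm_nonneg v
  have hxx : ⟪x, x⟫ = R^2 := by rw [real_inner_self_eq_norm_sq, hx]
  have hww : ⟪w, w⟫ = ‖v‖^2 - 2*⟪x, v⟫ + R^2 := by
    rw [hw, inner_sub_left, inner_sub_right, inner_sub_right, real_inner_comm v x, hxx,
      real_inner_self_eq_norm_sq]
    ring
  have hxw : ⟪x, w⟫ = ⟪x, v⟫ - R^2 := by rw [hw, inner_sub_right, hxx]
  have hne : ⟪x - (2:ℝ)⁻¹ • w, w⟫ ≠ 0 := by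
    rw [inner_sub_left, inner_smul_left]
    simp only [RCLike.star_def, starRingEnd_apply, star_trivial]
    rw [hxw, hww]
    nlinarith
  have hxb : x ≠ bb R v x := by
    intro h
    apply hne
    rw [h, bb, ← hw, add_sub_cancel_left, real_inner_comm, hsinner]
  have hxc : x ≠ cc R v x := by
    intro h
    apply hne
    rw [h, cc, ← hw]
    rw [show (2:ℝ)⁻¹ • w - sv R v x - (2:ℝ)⁻¹ • w = -(sv R v x) from by abel,
      inner_neg_left, real_inner_comm, hsinner, neg_zero]
  have hbc : bb R v x ≠ cc R v x := by
    intro h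
    have h3 := sub_eq_zero_of_eq h
    rw [bb, cc] at h3
    rw [show (2:ℝ)⁻¹ • (v - x) + sv R v x - ((2:ℝ)⁻¹ • (v - x) - sv R v x)
        = (2:ℝ) • sv R v x from by module] at h3
    rcases smul_eq_zero.1 h3 with h4 | h4
    · norm_num at h4
    · rw [h4, norm_zero] at hsnorm; linarith
  exact ⟨hbn, hcn, hsum, hxb, hxc, hbc⟩

lemma centroid_eq (A B C : V) :
    (Finset.univ : Finset (Fin 3)).centroid ℝ ![A, B, C] = (3:ℝ)⁻¹ • (A + B + C) := by
  rw [Finset.centroid_def,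
    Finset.affineCombination_eq_linear_combination _ _ _
      (by simp [Finset.centroidWeights_apply])]
  simp only [Fin.sum_univ_three, Finset.centroidWeights_apply, Matrix.cons_val_zero,
    Matrix.cons_val_one, Matrix.head_cons, Matrix.cons_val_two, Matrix.tail_cons]
  have : ((Finset.univ : Finset (Fin 3)).card : ℝ) = 3 := by simp
  rw [this]
  module

lemma orthocenter_eq (A B C O : V) (h : AffineIndependent ℝ ![A, B, C]) {R : ℝ}
    (hA : dist O A = R) (hB : dist O B = R) (hC : dist O C = R) :
    Affine.Triangle.orthocenter ⟨![A, B, C], h⟩ = A + B + C - (2:ℝ) • O := by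
  set t : Affine.Triangle ℝ V := ⟨![A, B, C], h⟩ with ht
  have hspan : affineSpan ℝ (Set.range t.points) = ⊤ := by
    rw [h.affineSpan_eq_top_iff_card_eq_finrank_add_one]
    simp
  have hO : O = t.circumcenter := by
    refine t.eq_circumcenter_of_dist_eq (p := O) (by rw [hspan]; trivial) (r := R) ?_
    intro i
    fin_cases i
    · show dist A O = R; rw [dist_comm]; exact hA
    · show dist B O = R; rw [dist_comm]; exact hB
    · show dist C O = R; rw [dist_comm]; exact hC
  rw [Affine.Triangle.orthocenter_eq_smul_vsub_vadd_circumcenter, ← hO,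
    show t.points = ![A, B, C] from rfl, centroid_eq]
  rw [vsub_eq_sub, vadd_eq_add]
  module

lemma acute_aux {R : ℝ} (hR : 0 < R) {a b c v : V} (ha : ‖a‖ = R) (hb : ‖b‖ = R)
    (hc : ‖c‖ = R) (hv : a + b + c = v) (hvR : ‖v‖ < R) :
    InnerProductGeometry.angle (b - a) (c - a) < π / 2 := by
  have hbc : (-(R^2) : ℝ) ≤ ⟪b, c⟫ := by
    have h1 := abs_real_inner_le_norm b c
    rw [hb, hc, abs_le] at h1
    nlinarith [h1.1]
  have hav : ⟪a, v⟫ < R ^ 2 := by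
    have h1 := real_inner_le_norm a v
    rw [ha] at h1
    nlinarith
  have e1 : ⟪b - a, c - a⟫ = ⟪b, c⟫ - ⟪a, c⟫ - ⟪a, b⟫ + ⟪a, a⟫ := by
    rw [inner_sub_left, inner_sub_right, inner_sub_right, real_inner_comm b a]
    ring
  have e2 : ⟪a, v⟫ = ⟪a, a⟫ + ⟪a, b⟫ + ⟪a, c⟫ := by
    rw [← hv, inner_add_right, inner_add_right]
  have e3 : ⟪a, a⟫ = R ^ 2 := by
    rw [real_inner_self_eq_norm_sq, ha]
  have key : 0 < ⟪b - a, c - a⟫ := by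
    rw [e1]
    linarith
  have hx : b - a ≠ 0 := by
    intro h0; rw [h0, inner_zero_left] at key; exact lt_irrefl 0 key
  have hy : c - a ≠ 0 := by
    intro h0; rw [h0, inner_zero_right] at key; exact lt_irrefl 0 key
  by_contra hle
  push_neg at hle
  have h1 : Real.cos (InnerProductGeometry.angle (b - a) (c - a)) ≤ 0 :=
    Real.cos_nonpos_of_pi_div_two_le_of_le hle
      (le_trans (InnerProductGeometry.angle_le_pi _ _) (by linarith [Real.pi_pos]))
  rw [InnerProductGeometry.cos_angle] at h1
  have hpos : 0 < ‖b - a‖ * ‖c - a‖ :=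
    mul_pos (norm_pos_iff.2 hx) (norm_pos_iff.2 hy)
  have := div_pos key hpos
  linarith

end

end InfTriAux

open InfTriAux

/-- If `dist O N < R/2`, there are infinitely many (unordered) triangles with circumcenter
`O`, circumradius `R` and nine-point center `N`, and every such triangle is acute. -/
theorem infinite_triangles_sharing_circumcircle_euler_circle_acute
    (O N : EuclideanSpace ℝ (Fin 2)) (R : ℝ) (hR : 0 < R) (hd : dist O N < R / 2) :
    {s : Set (EuclideanSpace ℝ (Fin 2)) |
        ∃ (A B C : EuclideanSpace ℝ (Fin 2)) (h : AffineIndependent ℝ ![A, B, C]),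
          s = {A, B, C} ∧ dist O A = R ∧ dist O B = R ∧ dist O C = R ∧
            midpoint ℝ O (Affine.Triangle.orthocenter ⟨![A, B, C], h⟩) = N}.Infinite ∧
      ∀ (A B C : EuclideanSpace ℝ (Fin 2)) (h : AffineIndependent ℝ ![A, B, C]),
        dist O A = R → dist O B = R → dist O C = R →
        midpoint ℝ O (Affine.Triangle.orthocenter ⟨![A, B, C], h⟩) = N →
        ∠ B A C < π / 2 ∧ ∠ A B C < π / 2 ∧ ∠ B C A < π / 2 := by
  set v : EuclideanSpace ℝ (Fin 2) := (2:ℝ) • (N - O) with hv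
  have hvR : ‖v‖ < R := by
    have : ‖v‖ = 2 * ‖N - O‖ := by
      rw [hv, norm_smul, Real.norm_ofNat]
    rw [this, show ‖N - O‖ = dist O N from by rw [← dist_eq_norm, dist_comm]]
    linarith
  set M : Set (Set (EuclideanSpace ℝ (Fin 2))) :=
    {s : Set (EuclideanSpace ℝ (Fin 2)) |
        ∃ (A B C : EuclideanSpace ℝ (Fin 2)) (h : AffineIndependent ℝ ![A, B, C]),
          s = {A, B, C} ∧ dist O A = R ∧ dist O B = R ∧ dist O C = R ∧
            midpoint ℝ O (Affine.Triangle.orthocenter ⟨![A, B, C], h⟩) = N} with hM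
  constructor
  · -- infinitude
    set T : EuclideanSpace ℝ (Fin 2) → Set (EuclideanSpace ℝ (Fin 2)) :=
      fun x => {O + x, O + bb R v x, O + cc R v x} with hT
    have hTmem : ∀ x : EuclideanSpace ℝ (Fin 2), ‖x‖ = R → T x ∈ M := by
      intro x hx
      obtain ⟨hbn, hcn, hsum, hxb, hxc, hbc⟩ := props hR hx hvR
      have hdists : ∀ y : EuclideanSpace ℝ (Fin 2), dist O (O + y) = ‖y‖ := by
        intro y; rw [dist_eq_norm]; simp
      have hcosph : Cospherical ({O + x, O + bb R v x, O + cc R v x} :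
          Set (EuclideanSpace ℝ (Fin 2))) := by
        refine ⟨O, R, ?_⟩
        intro p hp
        rcases hp with rfl | rfl | rfl
        · rw [dist_comm, hdists, hx]
        · rw [dist_comm, hdists, hbn]
        · rw [dist_comm, hdists, hcn]
      have hindep : AffineIndependent ℝ ![O + x, O + bb R v x, O + cc R v x] :=
        hcosph.affineIndependent_of_ne (by simpa using hxb) (by simpa using hxc)
          (by simpa using hbc)
      refine ⟨O + x, O + bb R v x, O + cc R v x, hindep, rfl, ?_, ?_, ?_, ?_⟩
      · rw [hdists, hx]
      · rw [hdists, hbn]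
      · rw [hdists, hcn]
      · rw [orthocenter_eq _ _ _ O hindep (by rw [hdists, hx]) (by rw [hdists, hbn])
          (by rw [hdists, hcn]), midpoint_eq_smul_add, invOf_eq_inv]
        have h3 : N = (2:ℝ)⁻¹ • (x + bb R v x + cc R v x) + O := by
          rw [hsum, hv]; module
        rw [h3]
        module
    set S : Set (EuclideanSpace ℝ (Fin 2)) :=
      (fun θ : ℝ => (!₂[R * Real.cos θ, R * Real.sin θ] : EuclideanSpace ℝ (Fin 2))) ''
        Set.Icc 0 π with hS
    have hSnorm : ∀ x ∈ S, ‖x‖ = R := by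
      rintro x ⟨θ, -, rfl⟩
      rw [EuclideanSpace.norm_eq]
      simp only [Fin.sum_univ_two, Matrix.cons_val_zero, Matrix.cons_val_one, Matrix.head_cons,
        Real.norm_eq_abs, sq_abs]
      rw [show (R * Real.cos θ)^2 + (R * Real.sin θ)^2 = R^2 from by
        nlinarith [Real.sin_sq_add_cos_sq θ]]
      exact Real.sqrt_sq hR.le
    have hSinf : S.Infinite := by
      refine Set.Infinite.image ?_ (Set.Icc_infinite Real.pi_pos)
      intro θ₁ h₁ θ₂ h₂ he
      have h0 : R * Real.cos θ₁ = R * Real.cos θ₂ := by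
        have := congrArg (fun y : EuclideanSpace ℝ (Fin 2) => y 0) he
        simpa using this
      exact Real.injOn_cos h₁ h₂ (mul_left_cancel₀ hR.ne' h0)
    have hTS : T '' S ⊆ M := by
      rintro s ⟨x, hxS, rfl⟩
      exact hTmem x (hSnorm x hxS)
    refine Set.Infinite.mono hTS ?_
    intro hfin
    apply hSinf
    have hcov : S ⊆ ⋃ s ∈ T '' S, ((fun p => p - O) '' s) := by
      intro x hx
      refine Set.mem_biUnion (Set.mem_image_of_mem T hx) ⟨O + x, ?_, add_sub_cancel_left O x⟩
      exact Set.mem_insert _ _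
    refine Set.Finite.subset (hfin.biUnion ?_) hcov
    rintro s ⟨x, -, rfl⟩
    exact ((Set.finite_singleton _).insert _ |>.insert _).image _
  · -- acuteness
    intro A B C h hA hB hC hmid
    have hA' : ‖A - O‖ = R := by rw [← dist_eq_norm, dist_comm]; exact hA
    have hB' : ‖B - O‖ = R := by rw [← dist_eq_norm, dist_comm]; exact hB
    have hC' : ‖C - O‖ = R := by rw [← dist_eq_norm, dist_comm]; exact hC
    have hsum : (A - O) + (B - O) + (C - O) = v := by
      have e : (2:ℝ)⁻¹ • (O + (A + B + C - (2:ℝ) • O)) = N := by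
        rw [← hmid, orthocenter_eq A B C O h hA hB hC, midpoint_eq_smul_add, invOf_eq_inv]
      rw [hv, ← e]
      module
    refine ⟨?_, ?_, ?_⟩
    · rw [EuclideanGeometry.angle, vsub_eq_sub, vsub_eq_sub,
        show B - A = (B - O) - (A - O) from by abel,
        show C - A = (C - O) - (A - O) from by abel]
      exact acute_aux hR hA' hB' hC' hsum hvR
    · rw [EuclideanGeometry.angle, vsub_eq_sub, vsub_eq_sub,
        show A - B = (A - O) - (B - O) from by abel,
        show C - B = (C - O) - (B - O) from by abel]
      exact acute_aux hR hB' hA' hC' (by rw [← hsum]; abel) hvR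
    · rw [EuclideanGeometry.angle, vsub_eq_sub, vsub_eq_sub,
        show B - C = (B - O) - (C - O) from by abel,
        show A - C = (A - O) - (C - O) from by abel]
      exact acute_aux hR hC' hB' hA' (by rw [← hsum]; abel) hvR
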